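/- For every x ∈ (−π/2, π/2), ln(cos x) = − ∑_{k=1}^∞ (2^{2k−1} · (2^{2k} − 1) · |B_{2k}| / (k · (2k)!)) · x^{2k}, where the series converges. -/

import Mathlib

set_option maxHeartbeats 1000000

open Real Filter Finset Nat Topology


private lemma prod_range_two_mul (g : ℕ → ℝ) (n : ℕ) :
    ∏ j ∈ range (2 * n), g j =
      (∏ i ∈ range n, g (2 * i)) * ∏ i ∈ range n, g (2 * i + 1) := by
  induction n with
  | zero => simp
  | succ n ih =>
    rw [show 2 * (n + 1) = (2 * n + 1) + 1 by ring, prod_range_succ, prod_range_succ,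
      prod_range_succ, prod_range_succ, ih]
    ring

private lemma zeta_val_pos {k : ℕ} (hk : k ≠ 0) :
    0 < (-1 : ℝ) ^ (k + 1) * (2 : ℝ) ^ (2 * k - 1) * π ^ (2 * k) *
        (bernoulli (2 * k) : ℝ) / (2 * k)! := by
  have h := hasSum_zeta_nat (k := k) hk
  have h1 := le_hasSum h 1 (fun j _ => by positivity)
  simp only [Nat.cast_one, one_pow, div_one] at h1
  linarith

private lemma abs_bernoulli_eq {k : ℕ} (hk : k ≠ 0) :
    |(bernoulli (2 * k) : ℝ)| = (-1 : ℝ) ^ (k + 1) * (bernoulli (2 * k) : ℝ) := by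
  have hZ := zeta_val_pos hk
  have hb : 0 < (-1 : ℝ) ^ (k + 1) * (bernoulli (2 * k) : ℝ) := by
    by_contra hle
    push_neg at hle
    have hfac : (0:ℝ) < (2 * k)! := by positivity
    have h2 : (0:ℝ) < (2:ℝ) ^ (2 * k - 1) * π ^ (2 * k) := by positivity
    have : (-1 : ℝ) ^ (k + 1) * (2 : ℝ) ^ (2 * k - 1) * π ^ (2 * k) *
        (bernoulli (2 * k) : ℝ) / (2 * k)! ≤ 0 := by
      apply div_nonpos_of_nonpos_of_nonneg _ hfac.le
      nlinarith
    linarith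
  calc |(bernoulli (2 * k) : ℝ)| = |(-1 : ℝ) ^ (k + 1) * (bernoulli (2 * k) : ℝ)| := by
        rw [abs_mul, abs_pow, abs_neg, abs_one, one_pow, one_mul]
    _ = _ := abs_of_pos hb

private lemma hasSum_odd_inv_pow {k : ℕ} (hk : k ≠ 0) :
    HasSum (fun n : ℕ => 1 / (2 * (n : ℝ) + 1) ^ (2 * k))
      ((1 - ((2 : ℝ) ^ (2 * k))⁻¹) *
        ((-1 : ℝ) ^ (k + 1) * (2 : ℝ) ^ (2 * k - 1) * π ^ (2 * k) *
          (bernoulli (2 * k) : ℝ) / (2 * k)!)) := by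
  set Z : ℝ := (-1 : ℝ) ^ (k + 1) * (2 : ℝ) ^ (2 * k - 1) * π ^ (2 * k) *
          (bernoulli (2 * k) : ℝ) / (2 * k)! with hZdef
  have hZ := hasSum_zeta_nat (k := k) hk
  set f : ℕ → ℝ := fun n => 1 / (n : ℝ) ^ (2 * k) with hf
  have heven : HasSum (fun n : ℕ => f (2 * n)) (((2 : ℝ) ^ (2 * k))⁻¹ * Z) := by
    have := hZ.mul_left ((2 : ℝ) ^ (2 * k))⁻¹
    refine this.congr_fun fun n => ?_
    simp only [hf]
    push_cast
    rw [mul_pow]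
    ring
  have hsumodd : Summable (fun n : ℕ => f (2 * n + 1)) :=
    hZ.summable.comp_injective (fun a b h => by omega)
  obtain ⟨S, hodd⟩ := hsumodd
  have htot := heven.even_add_odd hodd
  have hSval : S = (1 - ((2 : ℝ) ^ (2 * k))⁻¹) * Z := by
    have := htot.unique (show HasSum f Z from hZ)
    ring_nf
    ring_nf at this
    linarith
  rw [← hSval]
  refine hodd.congr_fun fun n => ?_
  simp only [hf]
  push_cast
  ring_nf

theorem log_cos_series (x : ℝ) (hx : x ∈ Set.Ioo (-(π / 2)) (π / 2)) :
    HasSum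
      (fun k : ℕ =>
        -(2 ^ (2 * (k + 1) - 1) * (2 ^ (2 * (k + 1)) - 1) * |(bernoulli (2 * (k + 1)) : ℝ)| /
            ((k + 1 : ℝ) * (Nat.factorial (2 * (k + 1)) : ℝ)) * x ^ (2 * (k + 1))))
      (Real.log (Real.cos x)) := by
  obtain ⟨hx1, hx2⟩ := hx
  have hπ : (0 : ℝ) < π := pi_pos
  rcases eq_or_ne x 0 with rfl | hx0
  · have : ∀ k : ℕ, -(2 ^ (2 * (k + 1) - 1) * (2 ^ (2 * (k + 1)) - 1) *
        |(bernoulli (2 * (k + 1)) : ℝ)| /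
        ((k + 1 : ℝ) * (Nat.factorial (2 * (k + 1)) : ℝ)) * (0:ℝ) ^ (2 * (k + 1))) = 0 := by
      intro k
      rw [zero_pow (by omega)]
      ring
    rw [Real.cos_zero, Real.log_one]
    exact (hasSum_zero).congr_fun fun k => this k
  -- basic bounds
  have hxabs : |x| < π / 2 := abs_lt.2 ⟨hx1, hx2⟩
  set a : ℝ := 2 * x / π with ha
  have hd : |a| < 1 := by
    rw [ha, abs_div, abs_of_pos hπ, div_lt_one hπ, abs_mul]
    rw [abs_of_pos (two_pos : (0:ℝ) < 2)]
    linarith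
  set q : ℕ → ℝ := fun n => a ^ 2 / (2 * (n : ℝ) + 1) ^ 2 with hqdef
  have ha2 : a ^ 2 < 1 := by
    have := pow_lt_one₀ (abs_nonneg a) hd (two_ne_zero)
    rwa [← sq_abs]
  have hq0 : ∀ n, 0 ≤ q n := fun n => by positivity
  have hq1 : ∀ n, q n < 1 := by
    intro n
    have hd0 : (0:ℝ) < (2 * (n : ℝ) + 1) ^ 2 := by positivity
    rw [hqdef, div_lt_one hd0]
    nlinarith [Nat.cast_nonneg (α := ℝ) n]
  have hcos : 0 < Real.cos x := Real.cos_pos_of_mem_Ioo ⟨hx1, hx2⟩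
  have hsin : Real.sin x ≠ 0 := by
    intro h
    exact hx0 ((Real.sin_eq_zero_iff_of_lt_of_lt (by linarith) (by linarith)).1 h)
  -- Euler products
  have hP := Real.tendsto_euler_sin_prod (2 * x / π)
  have hQ := Real.tendsto_euler_sin_prod (x / π)
  rw [show π * (2 * x / π) = 2 * x by field_simp] at hP
  rw [show π * (x / π) = x by field_simp] at hQ
  set g : ℕ → ℝ := fun j => 1 - a ^ 2 / ((j : ℝ) + 1) ^ 2 with hgdef
  set E : ℕ → ℝ := fun n => ∏ i ∈ range n, (1 - (x / π) ^ 2 / ((i : ℝ) + 1) ^ 2) with hEdef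
  set O : ℕ → ℝ := fun n => ∏ i ∈ range n, (1 - q i) with hOdef
  have hEpos : ∀ n, 0 < E n := by
    intro n
    refine Finset.prod_pos fun i _ => ?_
    have h1 : (1:ℝ) ≤ ((i : ℝ) + 1) ^ 2 := by nlinarith [Nat.cast_nonneg (α := ℝ) i]
    have h2 : (x / π) ^ 2 < 1 := by
      have : |x / π| < 1 := by
        rw [abs_div, abs_of_pos hπ, div_lt_one hπ]
        linarith
      have := pow_lt_one₀ (abs_nonneg _) this (two_ne_zero)
      rwa [← sq_abs]
    have hd0 : (0:ℝ) < ((i : ℝ) + 1) ^ 2 := by positivity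
    have : (x / π) ^ 2 / ((i : ℝ) + 1) ^ 2 < 1 := by
      rw [div_lt_one hd0]; linarith
    linarith
  -- key finite identity
  have hkey : ∀ n, O n = (2 * x * ∏ j ∈ range (2 * n), g j) / (2 * (x * E n)) := by
    intro n
    have hsplit := prod_range_two_mul g n
    have he : ∀ i, g (2 * i) = 1 - q i := by
      intro i
      simp only [hgdef, hqdef]
      push_cast
      ring_nf
    have ho : ∀ i, g (2 * i + 1) = 1 - (x / π) ^ 2 / ((i : ℝ) + 1) ^ 2 := by
      intro i
      simp only [hgdef, ha]
      push_cast
      have h4 : ((2 : ℝ) * i + 1 + 1) ^ 2 = 4 * ((i : ℝ) + 1) ^ 2 := by ring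
      have h4' : (2 * x / π) ^ 2 = 4 * (x / π) ^ 2 := by ring
      rw [h4, h4', mul_div_mul_left _ _ (by norm_num : (4:ℝ) ≠ 0)]
    have h1 : ∏ i ∈ range n, g (2 * i) = O n := Finset.prod_congr rfl fun i _ => he i
    have h2 : ∏ i ∈ range n, g (2 * i + 1) = E n := Finset.prod_congr rfl fun i _ => ho i
    rw [hsplit, h1, h2]
    rw [eq_div_iff (mul_ne_zero two_ne_zero (mul_ne_zero hx0 (hEpos n).ne'))]
    ring
  -- limits
  have h2n : Tendsto (fun n : ℕ => 2 * n) atTop atTop :=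
    tendsto_atTop_mono (fun n => Nat.le_mul_of_pos_left n two_pos) tendsto_id
  have hP2 : Tendsto (fun n : ℕ => 2 * x * ∏ j ∈ range (2 * n), g j) atTop
      (𝓝 (Real.sin (2 * x))) := hP.comp h2n
  have hQ2 : Tendsto (fun n : ℕ => 2 * (x * E n)) atTop (𝓝 (2 * Real.sin x)) := hQ.const_mul 2
  have hden : (2 : ℝ) * Real.sin x ≠ 0 := mul_ne_zero two_ne_zero hsin
  have hO : Tendsto O atTop (𝓝 (Real.cos x)) := by
    have h := (hP2.div hQ2 hden).congr (fun n => (hkey n).symm)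
    rwa [show Real.sin (2 * x) / (2 * Real.sin x) = Real.cos x from by
      rw [Real.sin_two_mul]; field_simp] at h
  -- sum of logs
  have hfacpos : ∀ n, 0 < 1 - q n := fun n => by linarith [hq1 n]
  set L : ℕ → ℝ := fun n => -Real.log (1 - q n) with hLdef
  have hLnn : ∀ n, 0 ≤ L n := by
    intro n
    rw [hLdef, neg_nonneg]
    exact Real.log_nonpos (by linarith [hq1 n]) (by linarith [hq0 n])
  have hL : HasSum L (-Real.log (Real.cos x)) := by
    rw [hasSum_iff_tendsto_nat_of_nonneg hLnn]
    have hsum : ∀ n, ∑ i ∈ range n, L i = -Real.log (O n) := by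
      intro n
      rw [hOdef, Real.log_prod (fun i _ => (hfacpos i).ne')]
      simp [hLdef]
    have h := ((Real.continuousAt_log hcos.ne').tendsto.comp hO).neg
    exact h.congr fun n => (hsum n).symm
  -- rows
  have row : ∀ n, HasSum (fun k : ℕ => q n ^ (k + 1) / (k + 1)) (L n) := by
    intro n
    have habs : |q n| < 1 := by rw [abs_of_nonneg (hq0 n)]; exact hq1 n
    exact hasSum_pow_div_log_of_abs_lt_one habs
  -- double sum
  set F : ℕ × ℕ → ℝ := fun p => q p.1 ^ (p.2 + 1) / (p.2 + 1) with hFdef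
  have hFnn : ∀ p, 0 ≤ F p := fun p =>
    div_nonneg (pow_nonneg (hq0 p.1) _) (by positivity)
  have hFs : Summable F := by
    rw [summable_prod_of_nonneg hFnn]
    exact ⟨fun n => (row n).summable, hL.summable.congr fun n => ((row n).tsum_eq).symm⟩
  have hFsum : HasSum F (-Real.log (Real.cos x)) := by
    have h1 := hFs.hasSum
    have h2 : HasSum L (∑' p, F p) := h1.prod_fiberwise row
    rwa [h2.unique hL] at h1
  have hswap : HasSum (fun p : ℕ × ℕ => F (p.2, p.1)) (-Real.log (Real.cos x)) :=
    ((Equiv.prodComm ℕ ℕ).hasSum_iff).2 hFsum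
  -- columns
  have col : ∀ k : ℕ, HasSum (fun n => F (n, k))
      ((a ^ (2 * (k + 1)) / ((k : ℝ) + 1)) *
        ((1 - ((2 : ℝ) ^ (2 * (k + 1)))⁻¹) *
          ((-1 : ℝ) ^ ((k + 1) + 1) * (2 : ℝ) ^ (2 * (k + 1) - 1) * π ^ (2 * (k + 1)) *
            (bernoulli (2 * (k + 1)) : ℝ) / (2 * (k + 1))!))) := by
    intro k
    have h := (hasSum_odd_inv_pow (k := k + 1) (Nat.succ_ne_zero k)).mul_left
        (a ^ (2 * (k + 1)) / ((k : ℝ) + 1))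
    refine h.congr_fun fun n => ?_
    show q n ^ (k + 1) / ((n, k).2 + 1 : ℝ) = _
    rw [hqdef]
    rw [div_pow, ← pow_mul, ← pow_mul]
    push_cast
    ring
  have hcol : HasSum (fun k : ℕ =>
      (a ^ (2 * (k + 1)) / ((k : ℝ) + 1)) *
        ((1 - ((2 : ℝ) ^ (2 * (k + 1)))⁻¹) *
          ((-1 : ℝ) ^ ((k + 1) + 1) * (2 : ℝ) ^ (2 * (k + 1) - 1) * π ^ (2 * (k + 1)) *
            (bernoulli (2 * (k + 1)) : ℝ) / (2 * (k + 1))!)))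
      (-Real.log (Real.cos x)) := hswap.prod_fiberwise col
  have hfinal := hcol.neg
  rw [neg_neg] at hfinal
  refine hfinal.congr_fun fun k => ?_
  rw [neg_inj]
  rw [abs_bernoulli_eq (Nat.succ_ne_zero k)]
  rw [show 2 * (k + 1) - 1 = 2 * k + 1 from by omega]
  rw [ha, div_pow]
  have hfac : (((2 * (k + 1))! : ℕ) : ℝ) ≠ 0 := Nat.cast_ne_zero.2 (Nat.factorial_ne_zero _)
  have hk1 : ((k : ℝ) + 1) ≠ 0 := by positivity
  have hπ' : π ≠ 0 := hπ.ne'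
  field_simp
  ring
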